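/- arXiv:1207.4274 — 3 statements merged into one kernel-verified Lean document; each statement's English description precedes it below -/
import Mathlib

section
/- Let n ≥ 1 and let α ∈ ℝ with cos α ≠ 1. Let ε_2, …, ε_n be independent random variables, each uniformly distributed on {−1, +1}, and define the angles φ_1 = 0 and φ_s = α·(ε_2 + ⋯ + ε_s) for 2 ≤ s ≤ n. Define the squared chain length L_n² = (∑_{s=1}^n cos φ_s)² + (∑_{s=1}^n sin φ_s)². Then the expectation of L_n² equals n·(1 + cos α)/(1 − cos α) − 2 cos α · (1 − cosⁿ α)/(1 − cos α)². -/
open MeasureTheory ProbabilityTheory Finset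
open scoped ENNReal NNReal

section Aux

variable {Ω : Type*} [MeasurableSpace Ω] {P : Measure Ω} [IsProbabilityMeasure P]

private lemma integrable_of_bdd_one {f : Ω → ℝ} (hf : Measurable f)
    (hb : ∀ ω, |f ω| ≤ 1) : Integrable f P :=
  (integrable_const (1 : ℝ)).mono' hf.aestronglyMeasurable
    (Filter.Eventually.of_forall fun ω => by simpa [Real.norm_eq_abs] using hb ω)

private lemma law_integral {e : Ω → ℝ} (hm : Measurable e)
    (hl : P.map e = ((1 : ℝ≥0∞)/2) • Measure.dirac (-1 : ℝ)
        + ((1 : ℝ≥0∞)/2) • Measure.dirac (1 : ℝ))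
    (f : ℝ → ℝ) (hf : Measurable f) :
    ∫ ω, f (e ω) ∂P = (f (-1) + f 1) / 2 := by
  rw [← integral_map hm.aemeasurable hf.aestronglyMeasurable, hl]
  have h1 : Integrable f (((1 : ℝ≥0∞)/2) • Measure.dirac (-1 : ℝ)) := by
    refine Integrable.smul_measure ?_ (by norm_num)
    exact ⟨hf.aestronglyMeasurable, by
      simpa [HasFiniteIntegral] using
        (lintegral_dirac' (-1 : ℝ) (measurable_coe_nnreal_ennreal.comp hf.nnnorm)).le.trans_lt
          ENNReal.coe_lt_top⟩
  have h2 : Integrable f (((1 : ℝ≥0∞)/2) • Measure.dirac (1 : ℝ)) := by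
    refine Integrable.smul_measure ?_ (by norm_num)
    exact ⟨hf.aestronglyMeasurable, by
      simpa [HasFiniteIntegral] using
        (lintegral_dirac' (1 : ℝ) (measurable_coe_nnreal_ennreal.comp hf.nnnorm)).le.trans_lt
          ENNReal.coe_lt_top⟩
  rw [integral_add_measure h1 h2, integral_smul_measure, integral_smul_measure,
    integral_dirac, integral_dirac]
  have : ((1 : ℝ≥0∞)/2).toReal = (1:ℝ)/2 := by
    simp [ENNReal.toReal_div]
  rw [this]
  simp [smul_eq_mul]
  ring

end Aux

section Chain

variable {Ω : Type*} [MeasurableSpace Ω] (P : Measure Ω) [IsProbabilityMeasure P]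
  (n : ℕ) (α : ℝ) (ε : ℕ → Ω → ℝ)

private lemma indep_sum (hmeas : ∀ i, Measurable (ε i))
    (hindep : iIndepFun
      (fun i : (Finset.Icc 2 n : Finset ℕ) => ε i) P)
    {F : Finset ℕ} (hF : F ⊆ Finset.Icc 2 n) {i : ℕ} (hi : i ∈ Finset.Icc 2 n)
    (hiF : i ∉ F) :
    IndepFun (fun ω => ∑ j ∈ F, ε j ω) (ε i) P := by
  classical
  set F' : Finset (Finset.Icc 2 n : Finset ℕ) :=
    (Finset.Icc 2 n).attach.filter (fun j => (j : ℕ) ∈ F) with hF'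
  have h := hindep.indepFun_finset_sum_of_notMem (fun j => hmeas j)
      (s := F') (i := ⟨i, hi⟩) (by simp [hF', hiF])
  have hsum : (∑ j ∈ F', fun ω => ε (j : ℕ) ω) = fun ω => ∑ j ∈ F, ε j ω := by
    funext ω
    rw [Finset.sum_apply]
    rw [hF', Finset.sum_filter, Finset.sum_attach (Finset.Icc 2 n)
      (fun j => if j ∈ F then ε j ω else 0), ← Finset.sum_filter,
      Finset.filter_mem_eq_inter, Finset.inter_eq_right.mpr hF]
  rwa [hsum] at h

private lemma moment_cos_sin (hmeas : ∀ i, Measurable (ε i))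
    (hindep : iIndepFun
      (fun i : (Finset.Icc 2 n : Finset ℕ) => ε i) P)
    (hlaw : ∀ i ∈ Finset.Icc 2 n,
      P.map (ε i) = ((1 : ℝ≥0∞)/2) • Measure.dirac (-1 : ℝ)
                  + ((1 : ℝ≥0∞)/2) • Measure.dirac (1 : ℝ))
    (F : Finset ℕ) (hF : F ⊆ Finset.Icc 2 n) :
    (∫ ω, Real.cos (α * ∑ j ∈ F, ε j ω) ∂P = (Real.cos α) ^ F.card) ∧
    (∫ ω, Real.sin (α * ∑ j ∈ F, ε j ω) ∂P = 0) := by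
  classical
  induction F using Finset.induction_on with
  | empty => simp
  | @insert i F hiF ih =>
    have hi : i ∈ Finset.Icc 2 n := hF (Finset.mem_insert_self i F)
    have hFsub : F ⊆ Finset.Icc 2 n := fun x hx => hF (Finset.mem_insert_of_mem hx)
    obtain ⟨ihc, ihs⟩ := ih hFsub
    set S : Ω → ℝ := fun ω => ∑ j ∈ F, ε j ω with hS
    have hSm : Measurable S := Finset.measurable_sum F (fun j _ => hmeas j)
    have hmul : Measurable (fun x : ℝ => α * x) := (measurable_id.const_mul α)
    have hcos : Measurable (fun x : ℝ => Real.cos (α * x)) := Real.measurable_cos.comp hmul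
    have hsin : Measurable (fun x : ℝ => Real.sin (α * x)) := Real.measurable_sin.comp hmul
    have hindepS : IndepFun S (ε i) P := indep_sum P n ε hmeas hindep hFsub hi hiF
    have hIndCC : IndepFun (fun ω => Real.cos (α * S ω)) (fun ω => Real.cos (α * ε i ω)) P :=
      hindepS.comp hcos hcos
    have hIndSC : IndepFun (fun ω => Real.sin (α * S ω)) (fun ω => Real.cos (α * ε i ω)) P :=
      hindepS.comp hsin hcos
    have hIndCS : IndepFun (fun ω => Real.cos (α * S ω)) (fun ω => Real.sin (α * ε i ω)) P :=
      hindepS.comp hcos hsin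
    have hIndSS : IndepFun (fun ω => Real.sin (α * S ω)) (fun ω => Real.sin (α * ε i ω)) P :=
      hindepS.comp hsin hsin
    have hmCS : Measurable (fun ω => Real.cos (α * S ω)) := hcos.comp hSm
    have hmSS : Measurable (fun ω => Real.sin (α * S ω)) := hsin.comp hSm
    have hmCe : Measurable (fun ω => Real.cos (α * ε i ω)) := hcos.comp (hmeas i)
    have hmSe : Measurable (fun ω => Real.sin (α * ε i ω)) := hsin.comp (hmeas i)
    have hEcos : ∫ ω, Real.cos (α * ε i ω) ∂P = Real.cos α := by
      rw [law_integral (hmeas i) (hlaw i hi) _ hcos]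
      simp [mul_neg_one, Real.cos_neg]
    have hEsin : ∫ ω, Real.sin (α * ε i ω) ∂P = 0 := by
      rw [law_integral (hmeas i) (hlaw i hi) _ hsin]
      simp [mul_neg_one, Real.sin_neg]
    have hsum : ∀ ω, α * ∑ j ∈ insert i F, ε j ω = α * ε i ω + α * S ω := by
      intro ω
      rw [Finset.sum_insert hiF]
      ring
    constructor
    · have heq : ∀ ω, Real.cos (α * ∑ j ∈ insert i F, ε j ω)
          = Real.cos (α * S ω) * Real.cos (α * ε i ω)
            - Real.sin (α * S ω) * Real.sin (α * ε i ω) := by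
        intro ω
        rw [hsum ω, Real.cos_add]
        ring
      have h1 : Integrable (fun ω => Real.cos (α * S ω) * Real.cos (α * ε i ω)) P :=
        integrable_of_bdd_one (hmCS.mul hmCe)
          (fun ω => by
            rw [abs_mul]
            exact mul_le_one₀ (Real.abs_cos_le_one _) (abs_nonneg _) (Real.abs_cos_le_one _))
      have h2 : Integrable (fun ω => Real.sin (α * S ω) * Real.sin (α * ε i ω)) P :=
        integrable_of_bdd_one (hmSS.mul hmSe)
          (fun ω => by
            rw [abs_mul]
            exact mul_le_one₀ (Real.abs_sin_le_one _) (abs_nonneg _) (Real.abs_sin_le_one _))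
      calc ∫ ω, Real.cos (α * ∑ j ∈ insert i F, ε j ω) ∂P
          = ∫ ω, (Real.cos (α * S ω) * Real.cos (α * ε i ω)
              - Real.sin (α * S ω) * Real.sin (α * ε i ω)) ∂P := by
            exact integral_congr_ae (Filter.Eventually.of_forall heq)
        _ = (∫ ω, Real.cos (α * S ω) * Real.cos (α * ε i ω) ∂P)
              - ∫ ω, Real.sin (α * S ω) * Real.sin (α * ε i ω) ∂P := integral_sub h1 h2
        _ = (∫ ω, Real.cos (α * S ω) ∂P) * (∫ ω, Real.cos (α * ε i ω) ∂P)
              - (∫ ω, Real.sin (α * S ω) ∂P) * (∫ ω, Real.sin (α * ε i ω) ∂P) := by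
            rw [hIndCC.integral_fun_mul_eq_mul_integral hmCS.aestronglyMeasurable hmCe.aestronglyMeasurable,
              hIndSS.integral_fun_mul_eq_mul_integral hmSS.aestronglyMeasurable hmSe.aestronglyMeasurable]
        _ = (Real.cos α) ^ (insert i F).card := by
            rw [ihc, ihs, hEcos, hEsin, Finset.card_insert_of_notMem hiF]
            ring
    · have heq : ∀ ω, Real.sin (α * ∑ j ∈ insert i F, ε j ω)
          = Real.sin (α * S ω) * Real.cos (α * ε i ω)
            + Real.cos (α * S ω) * Real.sin (α * ε i ω) := by
        intro ω
        rw [hsum ω, Real.sin_add]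
        ring
      have h1 : Integrable (fun ω => Real.sin (α * S ω) * Real.cos (α * ε i ω)) P :=
        integrable_of_bdd_one (hmSS.mul hmCe)
          (fun ω => by
            rw [abs_mul]
            exact mul_le_one₀ (Real.abs_sin_le_one _) (abs_nonneg _) (Real.abs_cos_le_one _))
      have h2 : Integrable (fun ω => Real.cos (α * S ω) * Real.sin (α * ε i ω)) P :=
        integrable_of_bdd_one (hmCS.mul hmSe)
          (fun ω => by
            rw [abs_mul]
            exact mul_le_one₀ (Real.abs_cos_le_one _) (abs_nonneg _) (Real.abs_sin_le_one _))
      calc ∫ ω, Real.sin (α * ∑ j ∈ insert i F, ε j ω) ∂P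
          = ∫ ω, (Real.sin (α * S ω) * Real.cos (α * ε i ω)
              + Real.cos (α * S ω) * Real.sin (α * ε i ω)) ∂P := by
            exact integral_congr_ae (Filter.Eventually.of_forall heq)
        _ = (∫ ω, Real.sin (α * S ω) * Real.cos (α * ε i ω) ∂P)
              + ∫ ω, Real.cos (α * S ω) * Real.sin (α * ε i ω) ∂P := integral_add h1 h2
        _ = (∫ ω, Real.sin (α * S ω) ∂P) * (∫ ω, Real.cos (α * ε i ω) ∂P)
              + (∫ ω, Real.cos (α * S ω) ∂P) * (∫ ω, Real.sin (α * ε i ω) ∂P) := by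
            rw [hIndSC.integral_fun_mul_eq_mul_integral hmSS.aestronglyMeasurable hmCe.aestronglyMeasurable,
              hIndCS.integral_fun_mul_eq_mul_integral hmCS.aestronglyMeasurable hmSe.aestronglyMeasurable]
        _ = 0 := by rw [ihs, hEsin]; ring

end Chain

private lemma geom_Icc (c : ℝ) (m : ℕ) :
    (1 - c) * ∑ k ∈ Finset.Icc 1 m, c ^ k = c - c ^ (m + 1) := by
  induction m with
  | zero => simp
  | succ m ih =>
    rw [← Finset.insert_Icc_right_eq_Icc_add_one (Nat.one_le_iff_ne_zero.mpr (Nat.succ_ne_zero m)),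
      Finset.sum_insert (by simp), mul_add, ih]
    ring

private lemma sum_pow_dist (c : ℝ) (hc : c ≠ 1) :
    ∀ n : ℕ, 1 ≤ n →
      ∑ s ∈ Finset.Icc 1 n, ∑ t ∈ Finset.Icc 1 n, c ^ (s - t + (t - s))
        = n * (1 + c) / (1 - c) - 2 * c * (1 - c ^ n) / (1 - c) ^ 2 := by
  have h1 : (1 : ℝ) - c ≠ 0 := sub_ne_zero.mpr (Ne.symm hc)
  intro n
  induction n with
  | zero => omega
  | succ m ih =>
    intro _
    rcases Nat.eq_zero_or_pos m with hm | hm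
    · subst hm
      norm_num
      field_simp
      ring
    · have ihm := ih hm
      have hins : Finset.Icc 1 (m + 1) = insert (m + 1) (Finset.Icc 1 m) :=
        (Finset.insert_Icc_right_eq_Icc_add_one (by omega)).symm
      have hnotmem : (m + 1) ∉ Finset.Icc 1 m := by simp
      have hG : ∑ t ∈ Finset.Icc 1 m, c ^ (m + 1 - t + (t - (m + 1)))
          = ∑ k ∈ Finset.Icc 1 m, c ^ k := by
        refine Finset.sum_nbij' (fun t => m + 1 - t) (fun k => m + 1 - k) ?_ ?_ ?_ ?_ ?_
        · intro a ha; simp only [Finset.mem_Icc] at ha; simp only [Finset.mem_Icc]; omega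
        · intro a ha; simp only [Finset.mem_Icc] at ha; simp only [Finset.mem_Icc]; omega
        · intro a ha; simp only [Finset.mem_Icc] at ha; omega
        · intro a ha; simp only [Finset.mem_Icc] at ha; omega
        · intro a ha
          simp only [Finset.mem_Icc] at ha
          congr 1
          omega
      have hG2 : ∑ t ∈ Finset.Icc 1 m, c ^ (t - (m + 1) + (m + 1 - t))
          = ∑ k ∈ Finset.Icc 1 m, c ^ k := by
        rw [← hG]
        refine Finset.sum_congr rfl (fun t ht => ?_)
        rw [add_comm]
      have hGval : ∑ k ∈ Finset.Icc 1 m, c ^ k = (c - c ^ (m + 1)) / (1 - c) := by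
        rw [eq_div_iff h1, mul_comm, geom_Icc]
      rw [hins, Finset.sum_insert hnotmem]
      rw [Finset.sum_insert hnotmem]
      have hss : (m + 1) - (m + 1) + ((m + 1) - (m + 1)) = 0 := by omega
      rw [hss, pow_zero]
      have hsplit : ∑ s ∈ Finset.Icc 1 m, ∑ t ∈ insert (m + 1) (Finset.Icc 1 m),
            c ^ (s - t + (t - s))
          = ∑ s ∈ Finset.Icc 1 m, (c ^ (s - (m + 1) + (m + 1 - s))
              + ∑ t ∈ Finset.Icc 1 m, c ^ (s - t + (t - s))) := by
        refine Finset.sum_congr rfl (fun s hs => ?_)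
        rw [Finset.sum_insert hnotmem]
      rw [hsplit, Finset.sum_add_distrib, hG, hG2, ihm, hGval]
      push_cast
      field_simp
      ring

/-- **Expected squared length of Feller's random chain.**
A planar chain of `n` unit links: the first link has direction angle `0`, and
each subsequent link turns by `±α` independently with probability `1/2`.
With `φ_s = α (ε_2 + ⋯ + ε_s)` the direction of the `s`-th link, the expected
squared end-to-end distance equals
`n (1 + cos α)/(1 - cos α) - 2 cos α (1 - cosⁿ α)/(1 - cos α)²`. -/
theorem expected_sq_chain_length
    {Ω : Type*} [MeasurableSpace Ω] (P : Measure Ω) [IsProbabilityMeasure P]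
    (n : ℕ) (hn : 1 ≤ n) (α : ℝ) (hα : Real.cos α ≠ 1)
    (ε : ℕ → Ω → ℝ) (hmeas : ∀ i, Measurable (ε i))
    (hindep : iIndepFun
      (fun i : (Finset.Icc 2 n : Finset ℕ) => ε i) P)
    (hlaw : ∀ i ∈ Finset.Icc 2 n,
      P.map (ε i) = ((1 : ℝ≥0∞)/2) • Measure.dirac (-1 : ℝ)
                  + ((1 : ℝ≥0∞)/2) • Measure.dirac (1 : ℝ)) :
    ∫ ω, ((∑ s ∈ Finset.Icc 1 n, Real.cos (α * ∑ j ∈ Finset.Icc 2 s, ε j ω)) ^ 2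
        + (∑ s ∈ Finset.Icc 1 n, Real.sin (α * ∑ j ∈ Finset.Icc 2 s, ε j ω)) ^ 2) ∂P
      = n * (1 + Real.cos α) / (1 - Real.cos α)
        - 2 * Real.cos α * (1 - (Real.cos α) ^ n) / (1 - Real.cos α) ^ 2 := by
  classical
  set S : ℕ → Ω → ℝ := fun s ω => ∑ j ∈ Finset.Icc 2 s, ε j ω with hSdef
  have hSm : ∀ s, Measurable (S s) := fun s => Finset.measurable_sum _ (fun j _ => hmeas j)
  -- pointwise identity
  have key : ∀ ω, ((∑ s ∈ Finset.Icc 1 n, Real.cos (α * S s ω)) ^ 2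
      + (∑ s ∈ Finset.Icc 1 n, Real.sin (α * S s ω)) ^ 2)
      = ∑ s ∈ Finset.Icc 1 n, ∑ t ∈ Finset.Icc 1 n,
          Real.cos (α * S s ω - α * S t ω) := by
    intro ω
    rw [sq, sq, Finset.sum_mul_sum, Finset.sum_mul_sum, ← Finset.sum_add_distrib]
    refine Finset.sum_congr rfl (fun s _ => ?_)
    rw [← Finset.sum_add_distrib]
    refine Finset.sum_congr rfl (fun t _ => ?_)
    rw [Real.cos_sub]
  -- per pair expectation
  have pair : ∀ s ∈ Finset.Icc 1 n, ∀ t ∈ Finset.Icc 1 n,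
      ∫ ω, Real.cos (α * S s ω - α * S t ω) ∂P
        = (Real.cos α) ^ (s - t + (t - s)) := by
    have half : ∀ s ∈ Finset.Icc 1 n, ∀ t ∈ Finset.Icc 1 n, t ≤ s →
        ∫ ω, Real.cos (α * S s ω - α * S t ω) ∂P
          = (Real.cos α) ^ (s - t + (t - s)) := by
      intro s hs t ht hts
      simp only [Finset.mem_Icc] at hs ht
      have hdiff : ∀ ω, α * S s ω - α * S t ω = α * ∑ j ∈ Finset.Ioc t s, ε j ω := by
        intro ω
        have hsum0 : ∑ j ∈ Finset.Ioc 1 t, ε j ω + ∑ j ∈ Finset.Ioc t s, ε j ω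
            = ∑ j ∈ Finset.Ioc 1 s, ε j ω :=
          Finset.sum_Ioc_consecutive _ ht.1 hts
        simp only [hSdef]
        rw [show (2 : ℕ) = 1 + 1 from rfl, Finset.Icc_add_one_left_eq_Ioc, Finset.Icc_add_one_left_eq_Ioc, ← hsum0]
        ring
      have hsubset : Finset.Ioc t s ⊆ Finset.Icc 2 n := by
        intro x hx
        simp only [Finset.mem_Ioc, Finset.mem_Icc] at *
        omega
      have hcard : (Finset.Ioc t s).card = s - t := Nat.card_Ioc t s
      have hexp : s - t + (t - s) = s - t := by omega
      calc ∫ ω, Real.cos (α * S s ω - α * S t ω) ∂P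
          = ∫ ω, Real.cos (α * ∑ j ∈ Finset.Ioc t s, ε j ω) ∂P :=
            integral_congr_ae (Filter.Eventually.of_forall fun ω => by dsimp only; rw [hdiff ω])
        _ = (Real.cos α) ^ (Finset.Ioc t s).card :=
            (moment_cos_sin P n α ε hmeas hindep hlaw _ hsubset).1
        _ = (Real.cos α) ^ (s - t + (t - s)) := by rw [hcard, hexp]
    intro s hs t ht
    rcases le_total t s with h | h
    · exact half s hs t ht h
    · have := half t ht s hs h
      have hflip : ∀ ω, Real.cos (α * S s ω - α * S t ω)
          = Real.cos (α * S t ω - α * S s ω) := fun ω => by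
        rw [← Real.cos_neg (α * S t ω - α * S s ω)]; ring_nf
      calc ∫ ω, Real.cos (α * S s ω - α * S t ω) ∂P
          = ∫ ω, Real.cos (α * S t ω - α * S s ω) ∂P :=
            integral_congr_ae (Filter.Eventually.of_forall fun ω => by dsimp only; exact hflip ω)
        _ = (Real.cos α) ^ (t - s + (s - t)) := this
        _ = (Real.cos α) ^ (s - t + (t - s)) := by rw [add_comm]
  -- integrability of each summand
  have hint : ∀ s t : ℕ, Integrable (fun ω => Real.cos (α * S s ω - α * S t ω)) P := by
    intro s t
    exact integrable_of_bdd_one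
      (Real.measurable_cos.comp (((hSm s).const_mul α).sub ((hSm t).const_mul α)))
      (fun ω => Real.abs_cos_le_one _)
  calc ∫ ω, ((∑ s ∈ Finset.Icc 1 n, Real.cos (α * S s ω)) ^ 2
        + (∑ s ∈ Finset.Icc 1 n, Real.sin (α * S s ω)) ^ 2) ∂P
      = ∫ ω, ∑ s ∈ Finset.Icc 1 n, ∑ t ∈ Finset.Icc 1 n,
          Real.cos (α * S s ω - α * S t ω) ∂P :=
        integral_congr_ae (Filter.Eventually.of_forall fun ω => key ω)
    _ = ∑ s ∈ Finset.Icc 1 n, ∫ ω, ∑ t ∈ Finset.Icc 1 n,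
          Real.cos (α * S s ω - α * S t ω) ∂P :=
        integral_finset_sum _ (fun s _ => integrable_finset_sum _ (fun t _ => hint s t))
    _ = ∑ s ∈ Finset.Icc 1 n, ∑ t ∈ Finset.Icc 1 n,
          ∫ ω, Real.cos (α * S s ω - α * S t ω) ∂P :=
        Finset.sum_congr rfl (fun s _ => integral_finset_sum _ (fun t _ => hint s t))
    _ = ∑ s ∈ Finset.Icc 1 n, ∑ t ∈ Finset.Icc 1 n, (Real.cos α) ^ (s - t + (t - s)) :=
        Finset.sum_congr rfl (fun s hs => Finset.sum_congr rfl (fun t ht => pair s hs t ht))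
    _ = n * (1 + Real.cos α) / (1 - Real.cos α)
        - 2 * Real.cos α * (1 - (Real.cos α) ^ n) / (1 - Real.cos α) ^ 2 :=
        sum_pow_dist (Real.cos α) hα n hn
end

section
/- Let a < b, T > 0, t ∈ [0, T], and let σ : [a, b] × [0, T] → ℝ be continuous. Define θ(u) = ∫_0^t σ(u, τ)² dτ for u ∈ [a, b], and fix λ ≥ 0. For each N ≥ 1 let u_k^N = a + k(b − a)/N, and let X_{N,1}, …, X_{N,N} be independent random variables with X_{N,k} Gaussian distributed with mean 0 and variance θ(u_k^N). Then lim_{N→∞} E[exp(−(λ(b − a)/N) · ∑_{k=1}^N X_{N,k}²)] = exp(−λ · ∫_a^b (∫_0^t σ(u, τ)² dτ) du). -/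
open MeasureTheory ProbabilityTheory
open scoped ENNReal NNReal

open Real Filter


lemma aux_log_bounds {z : ℝ} (hz : 0 ≤ z) :
    z - z ^ 2 ≤ Real.log (1 + z) ∧ Real.log (1 + z) ≤ z := by
  have h1 : (0:ℝ) < 1 + z := by linarith
  constructor
  · have h2 : (0:ℝ) < (1 + z)⁻¹ := by positivity
    have h3 := Real.log_le_sub_one_of_pos h2
    rw [Real.log_inv] at h3
    have h4 : (1 + z)⁻¹ * (1 + z) = 1 := inv_mul_cancel₀ h1.ne'
    nlinarith
  · have := Real.log_le_sub_one_of_pos h1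
    linarith

lemma aux_integral_exp_neg_mul_sq_gaussianReal (v : ℝ≥0) {s : ℝ} (hs : 0 ≤ s) :
    ∫ x, Real.exp (-(s * x ^ 2)) ∂(gaussianReal 0 v) = (Real.sqrt (1 + 2 * s * v))⁻¹ := by
  rcases eq_or_ne v 0 with hv | hv
  · subst hv
    simp [gaussianReal_zero_var]
  · have hv0 : (0:ℝ) < v := lt_of_le_of_ne v.coe_nonneg (by exact_mod_cast (Ne.symm hv))
    set c : ℝ := s + (2 * (v:ℝ))⁻¹ with hcdef
    have hc0 : 0 < c := by positivity
    have hmap : gaussianReal 0 v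
        = volume.withDensity fun x => ((Real.toNNReal (gaussianPDFReal 0 v x) : ℝ≥0) : ℝ≥0∞) := by
      rw [gaussianReal_of_var_ne_zero 0 hv]; rfl
    rw [hmap, integral_withDensity_eq_integral_smul
        (by exact (measurable_gaussianPDFReal 0 v).real_toNNReal) _]
    have hstep : ∀ x : ℝ, (Real.toNNReal (gaussianPDFReal 0 v x) : ℝ≥0) • Real.exp (-(s * x ^ 2))
        = (Real.sqrt (2 * π * v))⁻¹ * Real.exp (-(c * x ^ 2)) := by
      intro x
      rw [NNReal.smul_def, smul_eq_mul, Real.coe_toNNReal _ (gaussianPDFReal_nonneg 0 v x),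
        gaussianPDFReal]
      rw [mul_assoc, ← Real.exp_add]
      congr 2
      rw [hcdef]
      ring
    simp_rw [hstep, show ∀ x : ℝ, -(c * x ^ 2) = -c * x ^ 2 from fun x => by ring]
    rw [integral_const_mul, integral_gaussian]
    have h2vc : 1 + 2 * s * (v:ℝ) = 2 * (v:ℝ) * c := by
      rw [hcdef, mul_add, mul_inv_cancel₀ (by positivity : (2 * (v:ℝ)) ≠ 0)]; ring
    have hπc : π / c = (1 + 2 * s * (v:ℝ))⁻¹ * (2 * π * v) := by
      rw [h2vc, eq_comm, inv_mul_eq_div, div_eq_div_iff (by positivity) hc0.ne']; ring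
    rw [hπc, Real.sqrt_mul (by positivity : (0:ℝ) ≤ (1 + 2 * s * (v:ℝ))⁻¹), Real.sqrt_inv]
    have h2 : Real.sqrt (2 * π * v) ≠ 0 := by positivity
    field_simp

lemma aux_tendsto_riemannSum {f : ℝ → ℝ} (hf : Continuous f) {a b : ℝ} (hab : a < b) :
    Tendsto (fun N : ℕ => (b - a) / N * ∑ k ∈ Finset.range N, f (a + ((k:ℝ) + 1) * (b - a) / N))
      atTop (nhds (∫ u in a..b, f u)) := by
  have hba : (0:ℝ) < b - a := sub_pos.2 hab
  rw [Metric.tendsto_atTop]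
  intro ε hε
  have hε2 : 0 < ε / (2 * (b - a)) := by positivity
  obtain ⟨δ, hδ, hδ'⟩ := Metric.uniformContinuousOn_iff.1
    (isCompact_Icc.uniformContinuousOn_of_continuous hf.continuousOn) _ hε2
  obtain ⟨N₀, hN₀⟩ := exists_nat_gt ((b - a) / δ)
  refine ⟨max N₀ 1, fun N hN => ?_⟩
  have hN1 : 1 ≤ N := le_trans (le_max_right _ _) hN
  have hNN₀ : N₀ ≤ N := le_trans (le_max_left _ _) hN
  have hNpos : (0:ℝ) < N := by exact_mod_cast hN1
  set Δ : ℝ := (b - a) / N with hΔ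
  have hΔpos : 0 < Δ := div_pos hba hNpos
  have hΔδ : Δ < δ := by
    have hN₀pos : (0:ℝ) < N₀ := lt_of_le_of_lt (by positivity) hN₀
    have h1 : (b - a) / N ≤ (b - a) / N₀ :=
      div_le_div_of_nonneg_left hba.le hN₀pos (by exact_mod_cast hNN₀)
    have h2 : (b - a) / N₀ < δ := by
      rw [div_lt_iff₀ hN₀pos]
      rw [div_lt_iff₀ hδ] at hN₀
      linarith [hN₀]
    exact lt_of_le_of_lt h1 h2
  set x : ℕ → ℝ := fun k => a + k * Δ with hx
  have hxmono : ∀ k : ℕ, x k ≤ x (k + 1) := by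
    intro k
    simp only [hx]
    push_cast
    nlinarith [hΔpos]
  have hxmem : ∀ k : ℕ, k ≤ N → x k ∈ Set.Icc a b := by
    intro k hk
    have hk' : (k:ℝ) ≤ N := by exact_mod_cast hk
    constructor
    · simp only [hx]; nlinarith [hΔpos, Nat.cast_nonneg (α := ℝ) k]
    · simp only [hx, hΔ]
      rw [div_eq_mul_inv]
      have : (k:ℝ) * ((b - a) * (N:ℝ)⁻¹) ≤ (N:ℝ) * ((b - a) * (N:ℝ)⁻¹) := by
        apply mul_le_mul_of_nonneg_right hk' (by positivity)
      have hNe : (N:ℝ) * ((b - a) * (N:ℝ)⁻¹) = b - a := by field_simp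
      linarith
  have hint : ∀ k : ℕ, IntervalIntegrable f volume (x k) (x (k + 1)) :=
    fun k => hf.intervalIntegrable _ _
  have hsum : ∑ k ∈ Finset.range N, ∫ u in x k..x (k + 1), f u = ∫ u in a..b, f u := by
    rw [intervalIntegral.sum_integral_adjacent_intervals (fun k _ => hint k)]
    have h0 : x 0 = a := by simp [hx]
    have hNb : x N = b := by
      simp only [hx, hΔ]; field_simp; ring
    rw [h0, hNb]
  have harg : ∀ k : ℕ, a + ((k:ℝ) + 1) * (b - a) / N = x (k + 1) := by
    intro k; simp only [hx]; push_cast; ring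
  have hterm : ∀ k : ℕ, Δ * f (x (k + 1)) - ∫ u in x k..x (k + 1), f u
      = ∫ u in x k..x (k + 1), (f (x (k + 1)) - f u) := by
    intro k
    rw [intervalIntegral.integral_sub (intervalIntegrable_const) (hint k),
      intervalIntegral.integral_const]
    have hd : x (k + 1) - x k = Δ := by simp only [hx]; push_cast; ring
    rw [hd, smul_eq_mul]
  have hbound : ∀ k ∈ Finset.range N,
      ‖∫ u in x k..x (k + 1), (f (x (k + 1)) - f u)‖ ≤ ε / (2 * (b - a)) * Δ := by
    intro k hk
    have hkN : k + 1 ≤ N := Nat.succ_le_of_lt (Finset.mem_range.1 hk)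
    have hmem1 : x (k + 1) ∈ Set.Icc a b := hxmem _ hkN
    have hmemk : x k ∈ Set.Icc a b := hxmem _ (le_trans (Nat.le_succ k) hkN)
    have h := intervalIntegral.norm_integral_le_of_norm_le_const
      (C := ε / (2 * (b - a))) (a := x k) (b := x (k + 1))
      (f := fun u => f (x (k + 1)) - f u) ?_
    · have habs : |x (k + 1) - x k| = Δ := by
        rw [abs_of_nonneg (by linarith [hxmono k])]
        simp only [hx]; push_cast; ring
      rw [habs] at h
      exact h
    · intro u hu
      rw [Set.uIoc_of_le (hxmono k)] at hu
      have humem : u ∈ Set.Icc a b := ⟨le_trans hmemk.1 hu.1.le, le_trans hu.2 hmem1.2⟩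
      have hdist : dist (x (k + 1)) u < δ := by
        rw [Real.dist_eq, abs_of_nonneg (by linarith [hu.2])]
        have hd : x (k + 1) - x k = Δ := by simp only [hx]; push_cast; ring
        linarith [hu.1, hΔδ]
      have := hδ' (x (k + 1)) hmem1 u humem hdist
      rw [Real.dist_eq] at this
      rw [Real.norm_eq_abs]
      exact this.le
  -- assemble
  rw [Real.dist_eq]
  have hexpand : (b - a) / N * ∑ k ∈ Finset.range N, f (a + ((k:ℝ) + 1) * (b - a) / N)
      - ∫ u in a..b, f u
      = ∑ k ∈ Finset.range N, ∫ u in x k..x (k + 1), (f (x (k + 1)) - f u) := by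
    rw [← hsum, ← hΔ, Finset.mul_sum, ← Finset.sum_sub_distrib]
    refine Finset.sum_congr rfl fun k _ => ?_
    rw [harg k, hterm k]
  rw [hexpand]
  calc |∑ k ∈ Finset.range N, ∫ u in x k..x (k + 1), (f (x (k + 1)) - f u)|
      ≤ ∑ k ∈ Finset.range N, |∫ u in x k..x (k + 1), (f (x (k + 1)) - f u)| :=
        Finset.abs_sum_le_sum_abs _ _
    _ ≤ ∑ k ∈ Finset.range N, ε / (2 * (b - a)) * Δ := by
        refine Finset.sum_le_sum fun k hk => ?_
        have := hbound k hk
        rwa [Real.norm_eq_abs] at this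
    _ = N * (ε / (2 * (b - a)) * Δ) := by
        rw [Finset.sum_const, Finset.card_range, nsmul_eq_mul]
    _ = ε / 2 := by
        simp only [hΔ]
        field_simp
    _ < ε := by linarith

/-- **Lemma 2 of the paper.**  With `θ(u) = ∫_0^t σ(u, τ)² dτ` and, for each `N`,
independent centered Gaussians `X_{N,1}, …, X_{N,N}` with variances `θ(u_k^N)`
at the uniform partition points `u_k^N = a + k(b-a)/N`, one has
`E[exp (-(λ(b-a)/N) ∑_k X_{N,k}²)] → exp (-λ ∫_a^b (∫_0^t σ(u,τ)² dτ) du)`. -/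
theorem tendsto_exp_neg_discretized_eta_sq
    {Ω : Type*} [MeasurableSpace Ω] (P : Measure Ω) [IsProbabilityMeasure P]
    (a b T t lam : ℝ) (hab : a < b) (hT : 0 < T) (ht : t ∈ Set.Icc 0 T) (hlam : 0 ≤ lam)
    (σ : ℝ → ℝ → ℝ)
    (hσ : ContinuousOn (fun p : ℝ × ℝ => σ p.1 p.2) (Set.Icc a b ×ˢ Set.Icc 0 T))
    (X : ℕ → ℕ → Ω → ℝ) (hmeas : ∀ N k, Measurable (X N k))
    (hindep : ∀ N : ℕ, iIndepFun (fun k : Fin N => X N k) P)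
    (hlaw : ∀ N : ℕ, ∀ k < N, P.map (X N k)
        = gaussianReal 0
            (∫ τ in (0:ℝ)..t, (σ (a + (k + 1 : ℕ) * (b - a) / N) τ) ^ 2).toNNReal) :
    Filter.Tendsto (fun N : ℕ =>
        ∫ ω, Real.exp (-(lam * (b - a) / N * ∑ k ∈ Finset.range N, (X N k ω) ^ 2)) ∂P)
      Filter.atTop
      (nhds (Real.exp (-(lam * ∫ u in a..b, ∫ τ in (0:ℝ)..t, (σ u τ) ^ 2)))) := by
  have ht0 : 0 ≤ t := ht.1
  have hba : (0:ℝ) < b - a := sub_pos.2 hab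
  -- clamped version of σ and θ
  set cl : ℝ → ℝ := fun u => max a (min u b) with hcl
  set clT : ℝ → ℝ := fun τ => max 0 (min τ T) with hclT
  have hclc : Continuous cl := continuous_const.max (continuous_id.min continuous_const)
  have hclTc : Continuous clT := continuous_const.max (continuous_id.min continuous_const)
  have hclmem : ∀ u, cl u ∈ Set.Icc a b :=
    fun u => ⟨le_max_left _ _, max_le hab.le (min_le_right _ _)⟩
  have hclTmem : ∀ τ, clT τ ∈ Set.Icc 0 T :=
    fun τ => ⟨le_max_left _ _, max_le hT.le (min_le_right _ _)⟩
  have hcl_eq : ∀ u ∈ Set.Icc a b, cl u = u := by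
    intro u hu; simp only [hcl]; rw [min_eq_left hu.2, max_eq_right hu.1]
  have hclT_eq : ∀ τ ∈ Set.Icc 0 T, clT τ = τ := by
    intro τ hτ; simp only [hclT]; rw [min_eq_left hτ.2, max_eq_right hτ.1]
  set θ : ℝ → ℝ := fun u => ∫ τ in (0:ℝ)..t, (σ (cl u) (clT τ)) ^ 2 with hθdef
  have hθc : Continuous θ := by
    have hg : Continuous (Function.uncurry fun u τ : ℝ => (σ (cl u) (clT τ)) ^ 2) := by
      have : Continuous fun p : ℝ × ℝ => σ (cl p.1) (clT p.2) :=
        hσ.comp_continuous ((hclc.comp continuous_fst).prodMk (hclTc.comp continuous_snd))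
          (fun p => Set.mk_mem_prod (hclmem _) (hclTmem _))
      exact this.pow 2
    exact intervalIntegral.continuous_parametric_intervalIntegral_of_continuous' (μ := volume) hg 0 t
  have hθ0 : ∀ u, 0 ≤ θ u :=
    fun u => intervalIntegral.integral_nonneg ht0 (fun τ _ => sq_nonneg _)
  have hθeq : ∀ u ∈ Set.Icc a b, θ u = ∫ τ in (0:ℝ)..t, (σ u τ) ^ 2 := by
    intro u hu
    apply intervalIntegral.integral_congr
    intro τ hτ
    rw [Set.uIcc_of_le ht0] at hτ
    show σ (cl u) (clT τ) ^ 2 = σ u τ ^ 2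
    rw [hcl_eq u hu, hclT_eq τ ⟨hτ.1, le_trans hτ.2 ht.2⟩]
  have hIeq : (∫ u in a..b, ∫ τ in (0:ℝ)..t, (σ u τ) ^ 2) = ∫ u in a..b, θ u := by
    apply intervalIntegral.integral_congr
    intro u hu
    rw [Set.uIcc_of_le hab.le] at hu
    exact (hθeq u hu).symm
  -- partition points
  have hmem : ∀ N : ℕ, 1 ≤ N → ∀ k, k < N → a + ((k:ℝ) + 1) * (b - a) / N ∈ Set.Icc a b := by
    intro N hN k hk
    have hNpos : (0:ℝ) < N := by exact_mod_cast hN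
    have hk' : (k:ℝ) + 1 ≤ N := by exact_mod_cast Nat.succ_le_of_lt hk
    have hpos : 0 ≤ ((k:ℝ) + 1) * (b - a) / N := by positivity
    have hle : ((k:ℝ) + 1) * (b - a) / N ≤ b - a := by
      have h1 : ((k:ℝ) + 1) / N ≤ 1 := (div_le_one hNpos).2 hk'
      calc ((k:ℝ) + 1) * (b - a) / N = (((k:ℝ) + 1) / N) * (b - a) := by ring
        _ ≤ 1 * (b - a) := mul_le_mul_of_nonneg_right h1 hba.le
        _ = b - a := one_mul _
    exact ⟨le_add_of_nonneg_right hpos, by linarith⟩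
  set c : ℕ → ℝ := fun N => lam * (b - a) / N with hc
  have hc0 : ∀ N : ℕ, 0 ≤ c N := fun N => by positivity
  -- key product formula
  have hkey : ∀ N : ℕ, 1 ≤ N →
      (∫ ω, Real.exp (-(lam * (b - a) / N * ∑ k ∈ Finset.range N, (X N k ω) ^ 2)) ∂P)
        = ∏ k ∈ Finset.range N,
            (Real.sqrt (1 + 2 * c N * θ (a + ((k:ℝ) + 1) * (b - a) / N)))⁻¹ := by
    intro N hN
    have hYmeas : ∀ i : Fin N, Measurable (fun ω => (X N i ω) ^ 2) :=
      fun i => (hmeas N i).pow_const 2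
    have hYindep : iIndepFun (fun i : Fin N => fun ω => (X N i ω) ^ 2) P :=
      (hindep N).comp (fun _ x => x ^ 2) (fun _ => measurable_id.pow_const 2)
    have hmgf := hYindep.mgf_sum (t := -(c N)) hYmeas Finset.univ
    have hL : (∫ ω, Real.exp (-(lam * (b - a) / N * ∑ k ∈ Finset.range N, (X N k ω) ^ 2)) ∂P)
        = mgf (∑ i : Fin N, fun ω => (X N i ω) ^ 2) P (-(c N)) := by
      rw [mgf]
      congr 1
      ext ω
      congr 1
      rw [Finset.sum_apply, Fin.sum_univ_eq_sum_range (fun k => (X N k ω) ^ 2), hc]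
      ring
    rw [hL, hmgf, Fin.prod_univ_eq_prod_range (fun k => mgf (fun ω => (X N k ω) ^ 2) P (-(c N)))]
    refine Finset.prod_congr rfl fun k hk => ?_
    have hkN := Finset.mem_range.1 hk
    have hmgfk : mgf (fun ω => (X N k ω) ^ 2) P (-(c N))
        = ∫ x, Real.exp (-(c N * x ^ 2)) ∂(P.map (X N k)) := by
      have hcont : Continuous fun x : ℝ => Real.exp (-(c N * x ^ 2)) :=
        Real.continuous_exp.comp ((continuous_const.mul (continuous_pow 2)).neg)
      rw [mgf, integral_map (hmeas N k).aemeasurable hcont.aestronglyMeasurable]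
      simp_rw [neg_mul]
    rw [hmgfk, hlaw N k hkN, aux_integral_exp_neg_mul_sq_gaussianReal _ (hc0 N)]
    have hpt : a + ((k:ℝ) + 1) * (b - a) / N ∈ Set.Icc a b := hmem N hN k hkN
    have hnn : 0 ≤ ∫ τ in (0:ℝ)..t, (σ (a + ((k + 1 : ℕ) : ℝ) * (b - a) / N) τ) ^ 2 :=
      intervalIntegral.integral_nonneg ht0 (fun τ _ => sq_nonneg _)
    have hargc : a + ((k + 1 : ℕ) : ℝ) * (b - a) / N = a + ((k:ℝ) + 1) * (b - a) / N := by
      push_cast; ring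
    have hv : (((∫ τ in (0:ℝ)..t, (σ (a + ((k + 1 : ℕ) : ℝ) * (b - a) / N) τ) ^ 2).toNNReal
          : ℝ≥0) : ℝ) = θ (a + ((k:ℝ) + 1) * (b - a) / N) := by
      rw [Real.coe_toNNReal _ hnn, hargc]
      exact (hθeq _ hpt).symm
    rw [hv]
  -- bound on θ
  obtain ⟨M, hM⟩ := isCompact_Icc.exists_bound_of_continuousOn hθc.continuousOn
  have hM0 : 0 ≤ M := le_trans (norm_nonneg _) (hM a ⟨le_refl a, hab.le⟩)
  have hθle : ∀ u ∈ Set.Icc a b, θ u ≤ M := fun u hu => le_trans (le_abs_self _) (hM u hu)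
  -- the sums of logs
  set z : ℕ → ℕ → ℝ := fun N k => 2 * c N * θ (a + ((k:ℝ) + 1) * (b - a) / N) with hz
  have hz0 : ∀ N k, 0 ≤ z N k := fun N k => by
    have := hθ0 (a + ((k:ℝ) + 1) * (b - a) / N)
    have := hc0 N
    positivity
  set L : ℕ → ℝ := fun N => ∑ k ∈ Finset.range N, Real.log (1 + z N k) with hLdef
  -- Riemann sums
  have hR : Tendsto (fun N : ℕ => (b - a) / N *
      ∑ k ∈ Finset.range N, θ (a + ((k:ℝ) + 1) * (b - a) / N)) atTop
      (nhds (∫ u in a..b, θ u)) := aux_tendsto_riemannSum hθc hab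
  have hB : Tendsto (fun N : ℕ => ∑ k ∈ Finset.range N, z N k) atTop
      (nhds (2 * lam * ∫ u in a..b, θ u)) := by
    have h := hR.const_mul (2 * lam)
    refine h.congr fun N => ?_
    rw [Finset.mul_sum, Finset.mul_sum]
    refine Finset.sum_congr rfl fun k _ => ?_
    simp only [hz, hc]
    ring
  -- D N := sum of squares tends to 0
  have hDbound : ∀ N : ℕ, 1 ≤ N →
      ∑ k ∈ Finset.range N, (z N k) ^ 2 ≤ (2 * lam * (b - a) * M) ^ 2 / N := by
    intro N hN
    have hNpos : (0:ℝ) < N := by exact_mod_cast hN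
    have hzle : ∀ k, k < N → z N k ≤ 2 * lam * (b - a) * M / N := by
      intro k hk
      have hpt := hmem N hN k hk
      have h1 : θ (a + ((k:ℝ) + 1) * (b - a) / N) ≤ M := hθle _ hpt
      have h2 : 0 ≤ θ (a + ((k:ℝ) + 1) * (b - a) / N) := hθ0 _
      simp only [hz, hc]
      calc 2 * (lam * (b - a) / N) * θ (a + ((k:ℝ) + 1) * (b - a) / N)
          ≤ 2 * (lam * (b - a) / N) * M := by
            apply mul_le_mul_of_nonneg_left h1 (by positivity)
        _ = 2 * lam * (b - a) * M / N := by ring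
    calc ∑ k ∈ Finset.range N, (z N k) ^ 2
        ≤ ∑ k ∈ Finset.range N, (2 * lam * (b - a) * M / N) ^ 2 := by
          refine Finset.sum_le_sum fun k hk => ?_
          have h := hzle k (Finset.mem_range.1 hk)
          have h0 := hz0 N k
          nlinarith
      _ = N * (2 * lam * (b - a) * M / N) ^ 2 := by
          rw [Finset.sum_const, Finset.card_range, nsmul_eq_mul]
      _ = (2 * lam * (b - a) * M) ^ 2 / N := by
          field_simp
  have hD : Tendsto (fun N : ℕ => ∑ k ∈ Finset.range N, (z N k) ^ 2) atTop (nhds 0) := by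
    apply squeeze_zero' (Eventually.of_forall fun N =>
      Finset.sum_nonneg fun k _ => sq_nonneg _)
      (eventually_atTop.2 ⟨1, fun N hN => hDbound N hN⟩)
    exact tendsto_const_div_atTop_nhds_zero_nat _
  -- squeeze for L
  have hLlim : Tendsto L atTop (nhds (2 * lam * ∫ u in a..b, θ u)) := by
    have hA : Tendsto (fun N : ℕ => (∑ k ∈ Finset.range N, z N k)
        - ∑ k ∈ Finset.range N, (z N k) ^ 2) atTop
        (nhds (2 * lam * ∫ u in a..b, θ u)) := by
      have := hB.sub hD
      simpa using this
    refine tendsto_of_tendsto_of_tendsto_of_le_of_le' hA hB ?_ ?_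
    · refine Eventually.of_forall fun N => ?_
      rw [← Finset.sum_sub_distrib]
      refine Finset.sum_le_sum fun k _ => (aux_log_bounds (hz0 N k)).1
    · refine Eventually.of_forall fun N => ?_
      refine Finset.sum_le_sum fun k _ => (aux_log_bounds (hz0 N k)).2
  -- put it together
  have hexp : Tendsto (fun N : ℕ => Real.exp (-(1/2) * L N)) atTop
      (nhds (Real.exp (-(lam * ∫ u in a..b, ∫ τ in (0:ℝ)..t, (σ u τ) ^ 2)))) := by
    have h1 : Tendsto (fun N : ℕ => -(1/2) * L N) atTop
        (nhds (-(1/2) * (2 * lam * ∫ u in a..b, θ u))) := hLlim.const_mul _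
    have h2 := (Real.continuous_exp.tendsto _).comp h1
    have h3 : -(1/2) * (2 * lam * ∫ u in a..b, θ u)
        = -(lam * ∫ u in a..b, ∫ τ in (0:ℝ)..t, (σ u τ) ^ 2) := by
      rw [hIeq]; ring
    rw [h3] at h2
    exact h2
  refine hexp.congr' ?_
  filter_upwards [eventually_ge_atTop 1] with N hN
  rw [hkey N hN]
  rw [show (-(1/2) : ℝ) * L N = ∑ k ∈ Finset.range N, -(Real.log (1 + z N k) / 2) by
    simp only [hLdef]
    rw [Finset.mul_sum]
    exact Finset.sum_congr rfl fun k _ => by ring]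
  rw [Real.exp_sum]
  refine Finset.prod_congr rfl fun k hk => ?_
  have h1 : (0:ℝ) < 1 + z N k := by linarith [hz0 N k]
  rw [Real.exp_neg]
  congr 1
  rw [← Real.log_sqrt h1.le, Real.exp_log (Real.sqrt_pos.2 h1)]
end

section
/- Let l > 0, let a : [0, l] → ℝ and F : [0, l] → ℝ be continuous with F(0) = 0, and let m ≥ 1 be an integer. Then (∫_0^l a(u)·exp(−i F(u)) du)^m = m! · ∫_{0 ≤ u_1 ≤ ⋯ ≤ u_m ≤ l} (∏_{j=1}^m a(u_j)) · exp(−i · ∑_{j=1}^m (m − j + 1)·(F(u_j) − F(u_{j−1}))) du_1 ⋯ du_m, where u_0 = 0, the integral on the right being taken over the ordered simplex {0 ≤ u_1 ≤ ⋯ ≤ u_m ≤ l}. -/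
open MeasureTheory

/-- The `j`-th point of an ordered `m`-tuple `u`, in `1`-based indexing, with the
convention `u_0 = 0` (and value `0` outside `1 ≤ j ≤ m`). -/
noncomputable def chainPt (m : ℕ) (u : Fin m → ℝ) (j : ℕ) : ℝ :=
  if h : 1 ≤ j ∧ j ≤ m then u ⟨j - 1, by omega⟩ else 0

lemma tele_sub (s : ℕ → ℝ) : ∀ n : ℕ, ∑ j ∈ Finset.Icc 1 n, (s j - s (j - 1)) = s n - s 0
  | 0 => by simp
  | n + 1 => by
      rw [Finset.sum_Icc_succ_top (by omega : 1 ≤ n + 1), tele_sub s n,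
        show n + 1 - 1 = n from by omega]
      ring

lemma tele_main (m : ℕ) (s : ℕ → ℝ) (h0 : s 0 = 0) :
    ∑ j ∈ Finset.Icc 1 m, ((m - j + 1 : ℕ) : ℝ) * (s j - s (j - 1))
      = ∑ j ∈ Finset.Icc 1 m, s j := by
  induction m with
  | zero => simp
  | succ n ih =>
      rw [Finset.sum_Icc_succ_top (by omega : 1 ≤ n + 1),
        Finset.sum_Icc_succ_top (by omega : 1 ≤ n + 1)]
      have step : ∀ j ∈ Finset.Icc 1 n, ((n + 1 - j + 1 : ℕ) : ℝ) * (s j - s (j - 1))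
          = ((n - j + 1 : ℕ) : ℝ) * (s j - s (j - 1)) + (s j - s (j - 1)) := by
        intro j hj
        obtain ⟨h1, h2⟩ := Finset.mem_Icc.1 hj
        have h3 : n + 1 - j + 1 = (n - j + 1) + 1 := by omega
        rw [h3]; push_cast; ring
      rw [Finset.sum_congr rfl step, Finset.sum_add_distrib, ih, tele_sub, h0]
      have h4 : ((n + 1 - (n + 1) + 1 : ℕ) : ℝ) = 1 := by norm_num
      rw [h4, show n + 1 - 1 = n from by omega]; ring

lemma chain_sum (m : ℕ) (u : Fin m → ℝ) (G : ℝ → ℝ) :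
    ∑ j ∈ Finset.Icc 1 m, G (chainPt m u j) = ∑ i : Fin m, G (u i) := by
  rw [show Finset.Icc 1 m = Finset.Ico 1 (m + 1) from (Finset.Ico_add_one_right_eq_Icc 1 m).symm,
    Finset.sum_Ico_eq_sum_range]
  simp only [Nat.add_sub_cancel]
  simp only [show ∀ i : ℕ, 1 + i = i + 1 from fun i => by omega]
  rw [← Fin.sum_univ_eq_sum_range (fun i => G (chainPt m u (i + 1))) m]
  refine Finset.sum_congr rfl fun i _ => ?_
  rw [chainPt, dif_pos ⟨Nat.le_add_left 1 _, i.isLt⟩]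
  simp only [Nat.add_sub_cancel, Fin.eta]

set_option maxHeartbeats 1000000 in
/-- The symmetrization identity: the `m`-th power of an integral over `[0,l]` equals
`m!` times the integral over the ordered simplex. -/
lemma simplex_pow (l : ℝ) (f : ℝ → ℂ) (hf : IntegrableOn f (Set.Icc 0 l)) (m : ℕ) :
    (∫ u in Set.Icc 0 l, f u) ^ m
      = (m.factorial : ℂ) *
        ∫ u in {u : Fin m → ℝ | Monotone u ∧ ∀ i, u i ∈ Set.Icc 0 l}, ∏ i, f (u i) := by
  classical
  set g : ℝ → ℂ := (Set.Icc 0 l).indicator f with hg_def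
  have hg : Integrable g := (integrable_indicator_iff measurableSet_Icc).2 hf
  set P : (Fin m → ℝ) → ℂ := fun u => ∏ i, g (u i) with hP_def
  have hP : Integrable P := Integrable.fintype_prod (f := fun _ : Fin m => g) fun _ => hg
  -- the strict simplices
  set A : Equiv.Perm (Fin m) → Set (Fin m → ℝ) :=
    fun σ => {u | StrictMono (u ∘ σ)} with hA_def
  have hA_meas : ∀ σ, MeasurableSet (A σ) := by
    intro σ
    have : A σ = ⋂ (p : Fin m × Fin m) (_ : p.1 < p.2),
        {u : Fin m → ℝ | u (σ p.1) < u (σ p.2)} := by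
      ext u
      simp only [hA_def, Set.mem_iInter, Set.mem_setOf_eq]
      exact ⟨fun h p hp => h hp, fun h a b hab => h (a, b) hab⟩
    rw [this]
    exact MeasurableSet.iInter fun p => MeasurableSet.iInter fun _ =>
      measurableSet_lt (measurable_pi_apply _) (measurable_pi_apply _)
  -- the null set of non-injective tuples
  set N : Set (Fin m → ℝ) := {u | ¬ Function.Injective u} with hN_def
  have hN : volume N = 0 := by
    have key : ∀ i j : Fin m, i ≠ j → volume {u : Fin m → ℝ | u i = u j} = 0 := by
      intro i j hij
      set L : (Fin m → ℝ) →ₗ[ℝ] ℝ :=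
        (LinearMap.proj i : (Fin m → ℝ) →ₗ[ℝ] ℝ) - (LinearMap.proj j : (Fin m → ℝ) →ₗ[ℝ] ℝ)
        with hL
      have hset : {u : Fin m → ℝ | u i = u j} = (LinearMap.ker L : Set (Fin m → ℝ)) := by
        ext u
        simp [hL, LinearMap.mem_ker, sub_eq_zero]
      rw [hset]
      apply Measure.addHaar_submodule
      intro htop
      have h1 : Pi.single i (1 : ℝ) ∈ LinearMap.ker L := htop ▸ Submodule.mem_top
      rw [LinearMap.mem_ker] at h1
      simp [hL, Pi.single_eq_same, Pi.single_eq_of_ne (Ne.symm hij)] at h1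
    have hsub : N ⊆ ⋃ p : {p : Fin m × Fin m // p.1 ≠ p.2},
        {u : Fin m → ℝ | u p.1.1 = u p.1.2} := by
      intro u hu
      rw [hN_def, Set.mem_setOf_eq, Function.Injective] at hu
      push_neg at hu
      obtain ⟨x, y, hxy, hne⟩ := hu
      exact Set.mem_iUnion.2 ⟨⟨(x, y), hne⟩, hxy⟩
    exact measure_mono_null hsub (measure_iUnion_null fun p => key _ _ p.2)
  have hInj : ∀ᵐ u : Fin m → ℝ, Function.Injective u := by
    have := (MeasureTheory.measure_eq_zero_iff_ae_notMem (μ := (volume : Measure (Fin m → ℝ)))).1 hN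
    filter_upwards [this] with u hu
    simpa [hN_def] using hu
  -- step 1 : power as integral over the whole space
  have step1 : (∫ u in Set.Icc 0 l, f u) ^ m = ∫ u : Fin m → ℝ, P u := by
    rw [← integral_indicator measurableSet_Icc, ← hg_def]
    have h := MeasureTheory.integral_fintype_prod_eq_pow (ι := Fin m) (μ := volume) g
    rw [Fintype.card_fin] at h
    exact h.symm
  -- step 2 : decompose over the strict simplices
  have cover : ∀ u : Fin m → ℝ, Function.Injective u → ∃ σ, u ∈ A σ := by
    intro u hu
    refine ⟨Tuple.sort u, ?_⟩
    exact (Tuple.monotone_sort u).strictMono_of_injective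
      (hu.comp (Equiv.injective _))
  have disj : Set.Pairwise (Set.univ : Set (Equiv.Perm (Fin m))) (Function.onFun Disjoint A) := by
    intro σ _ τ _ hστ
    rw [Function.onFun, Set.disjoint_left]
    intro u huσ huτ
    apply hστ
    have huσ' : StrictMono (u ∘ σ) := huσ
    have huτ' : StrictMono (u ∘ τ) := huτ
    have hrange : Set.range (u ∘ σ) = Set.range (u ∘ τ) := by
      rw [Set.range_comp, Set.range_comp, Equiv.range_eq_univ, Equiv.range_eq_univ]
    haveI hwf : WellFoundedLT (Fin m) := inferInstance
    have hcomp : u ∘ σ = u ∘ τ :=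
      (@StrictMono.range_inj (Fin m) ℝ _ _ hwf _ _ huσ' huτ').1 hrange
    have huinj : Function.Injective u := by
      intro x y hxy
      have := huσ'.injective (a₁ := σ.symm x) (a₂ := σ.symm y)
        (by simpa [Function.comp, Equiv.apply_symm_apply] using hxy)
      simpa using congrArg σ this
    exact Equiv.ext fun i => huinj (congrFun hcomp i)
  have step2 : ∫ u : Fin m → ℝ, P u = ∑ σ : Equiv.Perm (Fin m), ∫ u in A σ, P u := by
    have hae : (Set.univ : Set (Fin m → ℝ)) =ᵐ[volume] ⋃ σ ∈ Finset.univ, A σ := by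
      rw [Filter.eventuallyEq_set]
      filter_upwards [hInj] with u hu
      simp only [Set.mem_univ, Set.mem_iUnion, true_iff, Finset.mem_univ, exists_true_left]
      exact cover u hu
    rw [← setIntegral_univ, setIntegral_congr_set hae,
      integral_biUnion_finset Finset.univ (fun σ _ => hA_meas σ)
        (by simpa using disj) (fun σ _ => hP.integrableOn)]
  -- step 3 : each strict simplex contributes the same integral
  have step3 : ∀ σ : Equiv.Perm (Fin m), ∫ u in A σ, P u = ∫ u in A 1, P u := by
    intro σ
    set T := MeasurableEquiv.piCongrLeft (fun _ : Fin m => ℝ) (σ.symm : Fin m ≃ Fin m) with hT_def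
    have hT : MeasurePreserving T volume volume :=
      volume_measurePreserving_piCongrLeft _ _
    have hTu : ∀ (x : Fin m → ℝ) (j : Fin m), T x j = x (σ j) := by
      intro x j
      have h := Equiv.piCongrLeft_apply_apply (fun _ : Fin m => ℝ)
        (σ.symm : Fin m ≃ Fin m) x (σ j)
      rw [Equiv.symm_apply_apply] at h
      exact h
    have hTfun : ∀ x : Fin m → ℝ, T x = x ∘ σ := fun x => funext (hTu x)
    have hpre : T ⁻¹' (A 1) = A σ := by
      ext x
      simp only [Set.mem_preimage, hA_def, Set.mem_setOf_eq, hTfun x,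
        Equiv.Perm.coe_one, Function.comp_id]
    calc ∫ u in A σ, P u = ∫ u in T ⁻¹' (A 1), P (T u) := by
          rw [hpre]
          refine setIntegral_congr_fun (hA_meas σ) fun u _ => ?_
          rw [hP_def]
          simp only [hTfun u, Function.comp_apply]
          exact (Equiv.prod_comp σ fun i => g (u i)).symm
      _ = ∫ u in A 1, P u := hT.setIntegral_preimage_emb
          (MeasurableEquiv.measurableEmbedding T) P (A 1)
  -- step 4 : identify the strict simplex integral with the monotone simplex integral
  set cube : Set (Fin m → ℝ) := Set.univ.pi fun _ => Set.Icc 0 l with hcube_def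
  have hcube_meas : MeasurableSet cube := MeasurableSet.univ_pi fun _ => measurableSet_Icc
  have hPind : ∀ u : Fin m → ℝ, P u = cube.indicator (fun v => ∏ i, f (v i)) u := by
    intro u
    by_cases h : ∀ i, u i ∈ Set.Icc 0 l
    · rw [Set.indicator_of_mem (Set.mem_univ_pi.2 h)]
      exact Finset.prod_congr rfl fun i _ => Set.indicator_of_mem (h i) f
    · push_neg at h
      obtain ⟨i, hi⟩ := h
      rw [Set.indicator_of_notMem (fun hmem => hi (Set.mem_univ_pi.1 hmem i))]
      exact Finset.prod_eq_zero (Finset.mem_univ i) (Set.indicator_of_notMem hi f)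
  have step4 : ∫ u in A 1, P u
      = ∫ u in {u : Fin m → ℝ | Monotone u ∧ ∀ i, u i ∈ Set.Icc 0 l}, ∏ i, f (u i) := by
    rw [show (fun u : Fin m → ℝ => P u) = cube.indicator (fun v => ∏ i, f (v i)) from
      funext hPind, setIntegral_indicator hcube_meas]
    refine setIntegral_congr_set ?_
    have hA1 : ∀ v : Fin m → ℝ, v ∈ A 1 ↔ StrictMono v := by
      intro v
      rw [hA_def]
      simp only [Set.mem_setOf_eq, Equiv.Perm.coe_one, Function.comp_id]
    rw [Filter.eventuallyEq_set]
    filter_upwards [hInj] with u hu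
    constructor
    · rintro ⟨h1, h2⟩
      exact ⟨((hA1 u).1 h1).monotone, fun i => Set.mem_univ_pi.1 h2 i⟩
    · rintro ⟨h1, h2⟩
      exact ⟨(hA1 u).2 (h1.strictMono_of_injective hu), Set.mem_univ_pi.2 h2⟩
  -- put everything together
  rw [step1, step2]
  have : ∑ σ : Equiv.Perm (Fin m), ∫ u in A σ, P u
      = (m.factorial : ℂ) * ∫ u in A 1, P u := by
    rw [Finset.sum_congr rfl fun σ _ => step3 σ, Finset.sum_const, Finset.card_univ,
      Fintype.card_perm, Fintype.card_fin, nsmul_eq_mul]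
  rw [this, step4]

set_option maxHeartbeats 1000000 in
/-- **The degree transformation (equation (7) of the paper), full form.**
For continuous `a, F : [0, l] → ℝ` with `F(0) = 0`,
`(∫_0^l a(u) e^{-iF(u)} du)^m` equals `m!` times the integral over the ordered
simplex `{0 ≤ u_1 ≤ ⋯ ≤ u_m ≤ l}` of
`(∏_j a(u_j)) exp (-i ∑_{j=1}^m (m - j + 1)(F(u_j) - F(u_{j-1})))`, with `u_0 = 0`. -/
theorem pow_integral_exp_phase_eq_factorial_mul_simplex_integral
    (l : ℝ) (hl : 0 < l) (a F : ℝ → ℝ)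
    (ha : ContinuousOn a (Set.Icc 0 l)) (hF : ContinuousOn F (Set.Icc 0 l))
    (hF0 : F 0 = 0) (m : ℕ) (hm : 1 ≤ m) :
    (∫ u in (0:ℝ)..l, (a u : ℂ) * Complex.exp (-Complex.I * (F u : ℂ))) ^ m
      = (m.factorial : ℂ) *
        ∫ u in {u : Fin m → ℝ | Monotone u ∧ ∀ i, u i ∈ Set.Icc 0 l},
          (∏ i, (a (u i) : ℂ)) *
            Complex.exp (-Complex.I *
              ((∑ j ∈ Finset.Icc 1 m, ((m - j + 1 : ℕ) : ℝ) *
                (F (chainPt m u j) - F (chainPt m u (j - 1)))) : ℝ)) := by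
  set f : ℝ → ℂ := fun x => (a x : ℂ) * Complex.exp (-Complex.I * (F x : ℂ)) with hf_def
  have hfc : ContinuousOn f (Set.Icc 0 l) := by
    apply ContinuousOn.mul
    · exact Complex.continuous_ofReal.comp_continuousOn ha
    · exact Complex.continuous_exp.comp_continuousOn
        (continuousOn_const.mul (Complex.continuous_ofReal.comp_continuousOn hF))
  have hf : IntegrableOn f (Set.Icc 0 l) := hfc.integrableOn_Icc
  have key := simplex_pow l f hf m
  rw [intervalIntegral.integral_of_le hl.le, ← integral_Icc_eq_integral_Ioc, key]
  congr 1
  have hS_meas : MeasurableSet {u : Fin m → ℝ | Monotone u ∧ ∀ i, u i ∈ Set.Icc 0 l} := by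
    have : {u : Fin m → ℝ | Monotone u ∧ ∀ i, u i ∈ Set.Icc 0 l}
        = (⋂ (p : Fin m × Fin m) (_ : p.1 ≤ p.2), {u : Fin m → ℝ | u p.1 ≤ u p.2})
          ∩ Set.univ.pi fun _ => Set.Icc 0 l := by
      ext u
      simp only [Set.mem_inter_iff, Set.mem_iInter, Set.mem_setOf_eq, Set.mem_pi,
        Set.mem_univ, true_implies]
      exact ⟨fun ⟨h1, h2⟩ => ⟨fun p hp => h1 hp, h2⟩,
        fun ⟨h1, h2⟩ => ⟨fun x y hxy => h1 (x, y) hxy, h2⟩⟩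
    rw [this]
    apply MeasurableSet.inter
    · exact MeasurableSet.iInter fun (p : Fin m × Fin m) =>
        MeasurableSet.iInter fun (_ : p.1 ≤ p.2) =>
        measurableSet_le (measurable_pi_apply _) (measurable_pi_apply _)
    · exact MeasurableSet.univ_pi fun _ => measurableSet_Icc
  refine setIntegral_congr_fun hS_meas fun u _ => ?_
  have h0 : chainPt m u 0 = 0 := by simp [chainPt]
  have tele := tele_main m (fun j => F (chainPt m u j)) (by show F (chainPt m u 0) = 0; rw [h0, hF0])
  rw [tele, chain_sum m u F]
  rw [hf_def]
  rw [Finset.prod_mul_distrib]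
  congr 1
  rw [← Complex.exp_sum]
  congr 1
  push_cast
  rw [Finset.mul_sum]
end
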